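/- For any integers i ≥ 1, m ≥ 0 and real a ≥ 1, if n/a ≥ e^m, then n·e^{i/a}·i^m / (a^m·(a·e^{i/a} + n)^2) ≤ max( (1/a)·log^m(n/a), e·a^{-m}/n ). -/

import Mathlib

/-- Key: if `m ≤ s ≤ t` with `0 < t`, then `t^m ≤ s^m * exp (t - s)`. -/
lemma key_pow_le (s t : ℝ) (m : ℕ) (hm : (m : ℝ) ≤ s) (hst : s ≤ t) (ht : 0 < t) :
    t ^ m ≤ s ^ m * Real.exp (t - s) := by
  rcases Nat.eq_zero_or_pos m with hm0 | hm1
  · subst hm0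
    simp only [pow_zero, one_mul]
    exact Real.one_le_exp (by linarith)
  · have hs0 : 0 < s := lt_of_lt_of_le (by exact_mod_cast hm1) hm
    have hts : t ^ m = s ^ m * (t / s) ^ m := by
      rw [div_pow]; field_simp
    rw [hts]
    have hpos : 0 < t / s := div_pos ht hs0
    have h1 : (t / s) ^ m = Real.exp ((m : ℝ) * Real.log (t / s)) := by
      rw [← Real.log_pow, Real.exp_log (by positivity)]
    have h2 : Real.log (t / s) ≤ t / s - 1 := Real.log_le_sub_one_of_pos hpos
    have h3 : (m : ℝ) * Real.log (t / s) ≤ t - s := by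
      have hlog0 : 0 ≤ Real.log (t / s) :=
        Real.log_nonneg (by rw [le_div_iff₀ hs0]; linarith)
      have : (m : ℝ) * Real.log (t / s) ≤ s * Real.log (t / s) :=
        mul_le_mul_of_nonneg_right hm hlog0
      have h4 : s * Real.log (t / s) ≤ s * (t / s - 1) :=
        mul_le_mul_of_nonneg_left h2 hs0.le
      have h5 : s * (t / s - 1) = t - s := by field_simp
      linarith
    gcongr
    rw [h1]
    exact Real.exp_le_exp.2 h3

/-- Lemma: for `i ≥ 1`, `m ∈ ℕ`, `a ≥ 1`, `n > 0` with `n/a ≥ e^m`, we have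
`n·e^{i/a}·i^m / (a^m·(a·e^{i/a}+n)^2) ≤ max( log^m(n/a)/a , e·a^{-m}/n )`. -/
theorem stmt0 (n a : ℝ) (i m : ℕ) (hi : 1 ≤ i) (hn : 0 < n) (ha : 1 ≤ a)
    (hna : Real.exp m ≤ n / a) :
    n * Real.exp ((i : ℝ) / a) * (i : ℝ) ^ m /
        (a ^ m * (a * Real.exp ((i : ℝ) / a) + n) ^ 2) ≤
      max (Real.log (n / a) ^ m / a) (Real.exp 1 * (1 / a ^ m) / n) := by
  have ha0 : (0 : ℝ) < a := lt_of_lt_of_le one_pos ha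
  have hna0 : 0 < n / a := div_pos hn ha0
  set t : ℝ := (i : ℝ) / a with hT
  set s : ℝ := Real.log (n / a) with hS
  have hi0 : (0 : ℝ) < (i : ℝ) := by exact_mod_cast hi
  have ht : 0 < t := div_pos hi0 ha0
  have hsm : (m : ℝ) ≤ s := (Real.le_log_iff_exp_le hna0).2 hna
  have hs0 : (0 : ℝ) ≤ s := le_trans (Nat.cast_nonneg m) hsm
  have hexps : Real.exp s = n / a := Real.exp_log hna0
  have hn_eq : n = a * Real.exp s := by
    field_simp at hexps; linarith
  set E : ℝ := Real.exp t with hE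
  have hE0 : 0 < E := Real.exp_pos t
  have him : ((i : ℝ)) ^ m = a ^ m * t ^ m := by
    rw [hT, div_pow]; field_simp
  have hD0 : 0 < (a * E + n) ^ 2 := by positivity
  have heq : n * E * (i : ℝ) ^ m / (a ^ m * (a * E + n) ^ 2)
      = n * E * t ^ m / ((a * E + n) ^ 2) := by
    rw [him]
    have ham : (0 : ℝ) < a ^ m := by positivity
    field_simp
  rw [heq]
  refine le_trans ?_ (le_max_left _ _)
  -- goal: n * E * t^m / (a*E+n)^2 ≤ s^m / a
  rw [div_le_div_iff₀ hD0 ha0]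
  rcases le_total t s with hts | hst
  · -- t ≤ s : use (a*E+n)^2 ≥ 4*a*E*n and t^m ≤ s^m
    have h1 : t ^ m ≤ s ^ m := pow_le_pow_left₀ ht.le hts m
    have h2 : 4 * (a * E) * n ≤ (a * E + n) ^ 2 := by nlinarith [sq_nonneg (a * E - n)]
    have htm0 : 0 ≤ t ^ m := by positivity
    nlinarith [mul_le_mul_of_nonneg_left h2 htm0, mul_le_mul_of_nonneg_right h1 (le_of_lt hD0),
      mul_pos (mul_pos ha0 hE0) hn]
  · -- s ≤ t : use (a*E+n)^2 ≥ (a*E)^2 and t^m ≤ s^m * exp(t-s)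
    have h1 : t ^ m ≤ s ^ m * Real.exp (t - s) := key_pow_le s t m hsm hst ht
    have h2 : (a * E) ^ 2 ≤ (a * E + n) ^ 2 := by
      nlinarith [mul_pos (mul_pos ha0 hE0) hn, mul_pos hn hn]
    have h3 : Real.exp s * Real.exp (t - s) = E := by
      rw [← Real.exp_add]; congr 1; ring
    have hsm0 : 0 ≤ s ^ m := by positivity
    -- n*E*t^m*a = a^2 * exp s * E * t^m ≤ a^2 * exp s * E * s^m * exp(t-s)
    --           = a^2 * E^2 * s^m = s^m * (a*E)^2 ≤ s^m * (a*E+n)^2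
    have hexp0 : 0 < Real.exp s := Real.exp_pos s
    calc n * E * t ^ m * a = a ^ 2 * Real.exp s * E * t ^ m := by rw [hn_eq]; ring
      _ ≤ a ^ 2 * Real.exp s * E * (s ^ m * Real.exp (t - s)) := by
          have : 0 ≤ a ^ 2 * Real.exp s * E := by positivity
          exact mul_le_mul_of_nonneg_left h1 this
      _ = s ^ m * (a * E) ^ 2 * (Real.exp s * Real.exp (t - s)) / E := by
          field_simp
      _ = s ^ m * (a * E) ^ 2 := by rw [h3]; field_simp
      _ ≤ s ^ m * (a * E + n) ^ 2 := mul_le_mul_of_nonneg_left h2 hsm0
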